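/- Let π ∈ S_n with LIS(π) = 2, LDS(π) = s, n = s+r, s ≥ r ≥ 1, and inv(π) = C(s,2)+C(r,2)+Δ with Δ < r. Then there exists a position i with 1 ≤ i ≤ Δ+1 such that either (a) π(i+t) = s+1−(i+t) for all 0 ≤ t < s−Δ and there is j with s+1 ≤ j ≤ s+Δ+1 such that π(j+t) = 2s+r+1−(j+t) for all 0 ≤ t < r−Δ, or (b) π(i+t) = r+1−(i+t) for all 0 ≤ t < r−Δ and there is j with r+1 ≤ j ≤ r+Δ+1 such that π(j+t) = s+2r+1−(j+t) for all 0 ≤ t < s−Δ. -/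

import Mathlib

open Finset

section Helpers

variable {n : ℕ}

lemma two_mul_choose_two (m : ℕ) : 2 * m.choose 2 = m * (m - 1) := by
  induction m with
  | zero => rfl
  | succ k ih =>
    rw [show k + 1 = k + 1 from rfl, Nat.choose_succ_succ, Nat.mul_add, ih,
      Nat.choose_one_right]
    cases k with
    | zero => rfl
    | succ l => simp only [Nat.succ_sub_one]; ring

lemma card_ltPairs (t : Finset (Fin n)) :
    ((t ×ˢ t).filter fun e : Fin n × Fin n => e.1 < e.2).card = t.card.choose 2 := by
  classical
  rw [← Finset.card_powersetCard 2 t]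
  apply Finset.card_bij (fun e _ => ({e.1, e.2} : Finset (Fin n)))
  · rintro ⟨e1, e2⟩ he
    simp only [mem_filter, mem_product] at he
    rw [Finset.mem_powersetCard]
    refine ⟨?_, ?_⟩
    · intro x hx
      rcases Finset.mem_insert.mp hx with h | h
      · exact h ▸ he.1.1
      · exact (Finset.mem_singleton.mp h) ▸ he.1.2
    · rw [Finset.card_insert_of_notMem (by simp [he.2.ne]), Finset.card_singleton]
  · rintro ⟨e1, e2⟩ he ⟨f1, f2⟩ hf hef
    simp only [mem_filter, mem_product] at he hf
    have h1 : e1 ∈ ({f1, f2} : Finset (Fin n)) := by rw [← hef]; simp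
    have h2 : e2 ∈ ({f1, f2} : Finset (Fin n)) := by rw [← hef]; simp
    simp only [Finset.mem_insert, Finset.mem_singleton] at h1 h2
    have hee := he.2; have hff := hf.2
    rcases h1 with rfl | rfl
    · rcases h2 with rfl | rfl
      · exact absurd hee (lt_irrefl _)
      · rfl
    · rcases h2 with rfl | rfl
      · exact absurd (hee.trans hff) (lt_irrefl _)
      · exact absurd hee (lt_irrefl _)
  · intro u hu
    rw [Finset.mem_powersetCard] at hu
    obtain ⟨x, y, hxy, rfl⟩ := Finset.card_eq_two.mp hu.2
    have hx : x ∈ t := hu.1 (by simp)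
    have hy : y ∈ t := hu.1 (by simp)
    rcases hxy.lt_or_gt with h | h
    · exact ⟨(x, y), by simp [mem_filter, mem_product, hx, hy, h], rfl⟩
    · exact ⟨(y, x), by simp [mem_filter, mem_product, hx, hy, h], by rw [Finset.pair_comm]⟩

lemma lowerSet_mem_iff {t : Finset (Fin n)}
    (h : ∀ p q : Fin n, p ≤ q → q ∈ t → p ∈ t) (p : Fin n) :
    p ∈ t ↔ (p : ℕ) < t.card := by
  constructor
  · intro hp
    have hsub : Finset.Iic p ⊆ t := fun q hq => h q p (Finset.mem_Iic.mp hq) hp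
    have := Finset.card_le_card hsub
    rw [Fin.card_Iic] at this
    omega
  · intro hp
    by_contra hnp
    have hsub : t ⊆ Finset.Iio p := by
      intro q hq
      rw [Finset.mem_Iio]
      by_contra hqp
      exact hnp (h p q (not_lt.mp hqp) hq)
    have := Finset.card_le_card hsub
    rw [Fin.card_Iio] at this
    omega

lemma upperSet_mem_iff {t : Finset (Fin n)}
    (h : ∀ p q : Fin n, p ≤ q → p ∈ t → q ∈ t) (p : Fin n) :
    p ∈ t ↔ n ≤ (p : ℕ) + t.card := by
  have hpn : (p : ℕ) < n := p.isLt
  constructor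
  · intro hp
    have hsub : Finset.Ici p ⊆ t := fun q hq => h p q (Finset.mem_Ici.mp hq) hp
    have := Finset.card_le_card hsub
    rw [Fin.card_Ici] at this
    omega
  · intro hp
    by_contra hnp
    have hsub : t ⊆ Finset.Ioi p := by
      intro q hq
      rw [Finset.mem_Ioi]
      by_contra hqp
      exact hnp (h q p (not_lt.mp hqp) hq)
    have := Finset.card_le_card hsub
    rw [Fin.card_Ioi] at this
    omega

lemma coe_eq_card_lt (π : Equiv.Perm (Fin n)) (p : Fin n) :
    (π p : ℕ) = (univ.filter fun q => π q < π p).card := by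
  classical
  rw [← Fin.card_Iio (π p)]
  apply Finset.card_bij' (fun v _ => π.symm v) (fun q _ => π q)
  · intro v hv
    simp only [mem_filter, mem_univ, true_and]
    rw [Equiv.apply_symm_apply]
    exact Finset.mem_Iio.mp hv
  · intro q hq
    simp only [mem_filter] at hq
    exact Finset.mem_Iio.mpr hq.2
  · intro v _; exact Equiv.apply_symm_apply _ _
  · intro q _; exact Equiv.symm_apply_apply _ _

lemma filter_split {A B : Finset (Fin n)} (hpart : ∀ i, i ∈ A ↔ i ∉ B)
    (P : Fin n → Prop) [DecidablePred P] :
    (univ.filter P).card = (A.filter P).card + (B.filter P).card := by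
  classical
  rw [← Finset.card_union_of_disjoint]
  · congr 1
    ext q
    simp only [mem_filter, mem_univ, true_and, mem_union]
    constructor
    · intro hq
      by_cases hqA : q ∈ A
      · exact Or.inl ⟨hqA, hq⟩
      · exact Or.inr ⟨not_not.mp (fun hb => hqA ((hpart q).mpr hb)), hq⟩
    · rintro (⟨_, hq⟩ | ⟨_, hq⟩) <;> exact hq
  · rw [Finset.disjoint_left]
    rintro e he hb
    exact (hpart e).mp (mem_filter.mp he).1 (mem_filter.mp hb).1

end Helpers

section Cross
variable {n : ℕ}

def crossInv (π : Equiv.Perm (Fin n)) (A B : Finset (Fin n)) : Finset (Fin n × Fin n) :=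
  univ.filter fun e =>
    e.1 < e.2 ∧ π e.2 < π e.1 ∧ ((e.1 ∈ A ∧ e.2 ∈ B) ∨ (e.1 ∈ B ∧ e.2 ∈ A))

variable {π : Equiv.Perm (Fin n)} {A B : Finset (Fin n)}

lemma crossInv_card_A (hpart : ∀ i, i ∈ A ↔ i ∉ B)
    (hB : ∀ q ∈ B, ∀ j, q < j → π j < π q) :
    (crossInv π A B).card
      = ∑ p ∈ A, ((B.filter (· < p)).card + (B.filter fun q => π q < π p).card) := by
  classical
  rw [Finset.card_eq_sum_card_fiberwise
    (f := fun e : Fin n × Fin n => if e.1 ∈ A then e.1 else e.2) (t := A) ?_]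
  · apply Finset.sum_congr rfl
    intro p hp
    have hfib : (crossInv π A B).filter
          (fun e : Fin n × Fin n => (if e.1 ∈ A then e.1 else e.2) = p)
        = ((B.filter (· < p)).image fun q => (q, p))
          ∪ ((B.filter fun q => π q < π p).image fun q => (p, q)) := by
      ext e
      simp only [crossInv, mem_filter, mem_univ, true_and, mem_union, mem_image]
      constructor
      · rintro ⟨⟨hlt, hinv, hcross⟩, hfe⟩
        by_cases h1 : e.1 ∈ A
        · rw [if_pos h1] at hfe
          rcases hcross with ⟨_, h2B⟩ | ⟨h1B, _⟩
          · refine Or.inr ⟨e.2, ⟨h2B, ?_⟩, ?_⟩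
            · rw [← hfe]; exact hinv
            · rw [← hfe]
          · exact absurd h1B ((hpart e.1).mp h1)
        · rw [if_neg h1] at hfe
          rcases hcross with ⟨h1A, _⟩ | ⟨h1B, _⟩
          · exact absurd h1A h1
          · refine Or.inl ⟨e.1, ⟨h1B, ?_⟩, ?_⟩
            · rw [← hfe]; exact hlt
            · rw [← hfe]
      · rintro (⟨q, hq, rfl⟩ | ⟨q, hq, rfl⟩)
        · have hqA : q ∉ A := fun h => (hpart q).mp h hq.1
          exact ⟨⟨hq.2, hB q hq.1 p hq.2, Or.inr ⟨hq.1, hp⟩⟩, by simp [hqA]⟩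
        · have hpq : p < q := by
            rcases lt_trichotomy p q with h | h | h
            · exact h
            · exact absurd hq.2 (by rw [h]; exact lt_irrefl _)
            · exact absurd (hB q hq.1 p h) (lt_asymm hq.2)
          exact ⟨⟨hpq, hq.2, Or.inl ⟨hp, hq.1⟩⟩, by simp [hp]⟩
    rw [hfib, Finset.card_union_of_disjoint, Finset.card_image_of_injective,
      Finset.card_image_of_injective]
    · exact fun a b h => (Prod.ext_iff.mp h).2
    · exact fun a b h => (Prod.ext_iff.mp h).1
    · rw [Finset.disjoint_left]
      rintro e he he'
      simp only [mem_image, mem_filter] at he he'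
      obtain ⟨q, hq, rfl⟩ := he
      obtain ⟨q', hq', heq⟩ := he'
      have : q = p := (Prod.ext_iff.mp heq.symm).1
      exact (hpart p).mp hp (this ▸ hq.1)
  · rintro e he
    simp only [Finset.mem_coe, crossInv, mem_filter, mem_univ, true_and] at he
    rcases he.2.2 with ⟨h1A, _⟩ | ⟨h1B, h2A⟩
    · dsimp only; rw [if_pos h1A]; exact h1A
    · dsimp only; rw [if_neg (fun h => (hpart e.1).mp h h1B)]; exact h2A

lemma crossInv_card_B (hpart : ∀ i, i ∈ A ↔ i ∉ B)
    (hB : ∀ q ∈ B, ∀ j, q < j → π j < π q) :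
    (crossInv π A B).card
      = ∑ q ∈ B, ((A.filter fun p => q < p).card + (A.filter fun p => π q < π p).card) := by
  classical
  rw [Finset.card_eq_sum_card_fiberwise
    (f := fun e : Fin n × Fin n => if e.1 ∈ B then e.1 else e.2) (t := B) ?_]
  · apply Finset.sum_congr rfl
    intro q hq
    have hfib : (crossInv π A B).filter
          (fun e : Fin n × Fin n => (if e.1 ∈ B then e.1 else e.2) = q)
        = ((A.filter fun p => q < p).image fun p => (q, p))
          ∪ ((A.filter fun p => π q < π p).image fun p => (p, q)) := by
      ext e
      simp only [crossInv, mem_filter, mem_univ, true_and, mem_union, mem_image]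
      constructor
      · rintro ⟨⟨hlt, hinv, hcross⟩, hfe⟩
        by_cases h1 : e.1 ∈ B
        · rw [if_pos h1] at hfe
          rcases hcross with ⟨h1A, _⟩ | ⟨_, h2A⟩
          · exact absurd h1 ((hpart e.1).mp h1A)
          · refine Or.inl ⟨e.2, ⟨h2A, ?_⟩, ?_⟩
            · rw [← hfe]; exact hlt
            · rw [← hfe]
        · rw [if_neg h1] at hfe
          rcases hcross with ⟨h1A, h2B⟩ | ⟨h1B, _⟩
          · refine Or.inr ⟨e.1, ⟨h1A, ?_⟩, ?_⟩
            · rw [← hfe]; exact hinv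
            · rw [← hfe]
          · exact absurd h1B h1
      · rintro (⟨p, hpm, rfl⟩ | ⟨p, hpm, rfl⟩)
        · exact ⟨⟨hpm.2, hB q hq p hpm.2, Or.inr ⟨hq, hpm.1⟩⟩, by simp [hq]⟩
        · have hpq : p < q := by
            rcases lt_trichotomy p q with h | h | h
            · exact h
            · exact absurd hpm.2 (by rw [h]; exact lt_irrefl _)
            · exact absurd (hB q hq p h) (lt_asymm hpm.2)
          exact ⟨⟨hpq, hpm.2, Or.inl ⟨hpm.1, hq⟩⟩,
            by simp [fun h => (hpart p).mp hpm.1 h]⟩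
    rw [hfib, Finset.card_union_of_disjoint, Finset.card_image_of_injective,
      Finset.card_image_of_injective]
    · exact fun a b h => (Prod.ext_iff.mp h).1
    · exact fun a b h => (Prod.ext_iff.mp h).2
    · rw [Finset.disjoint_left]
      rintro e he he'
      simp only [mem_image, mem_filter] at he he'
      obtain ⟨p, hpm, rfl⟩ := he
      obtain ⟨p', hp', heq⟩ := he'
      have : p' = q := (Prod.ext_iff.mp heq).1
      exact (hpart q).mp (this ▸ hp'.1) hq
  · rintro e he
    simp only [Finset.mem_coe, crossInv, mem_filter, mem_univ, true_and] at he
    rcases he.2.2 with ⟨h1A, h2B⟩ | ⟨h1B, _⟩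
    · dsimp only; rw [if_neg (fun h => (hpart e.1).mp h1A h)]; exact h2B
    · dsimp only; rw [if_pos h1B]; exact h1B

end Cross

section Val
variable {n : ℕ} {π : Equiv.Perm (Fin n)} {A B : Finset (Fin n)}

lemma valA (hpart : ∀ i, i ∈ A ↔ i ∉ B)
    (hAanti : ∀ p ∈ A, ∀ p' ∈ A, p < p' → π p' < π p)
    {p : Fin n} (hp : p ∈ A)
    (hx : B.filter (· < p) = ∅) (hy : (B.filter fun q => π q < π p) = ∅) :
    (π p : ℕ) + 1 + (p : ℕ) = A.card := by
  classical
  have h1 : (π p : ℕ) = (A.filter fun q => π q < π p).card := by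
    rw [coe_eq_card_lt π p, filter_split hpart, hy, Finset.card_empty, Nat.add_zero]
  have h2 : (A.filter fun q => π q < π p) = A.filter fun q => p < q := by
    apply Finset.filter_congr
    intro q hq
    constructor
    · intro hlt
      rcases lt_trichotomy p q with h | h | h
      · exact h
      · exact absurd hlt (by rw [h]; exact lt_irrefl _)
      · exact absurd (hAanti q hq p hp h) (lt_asymm hlt)
    · exact fun h => hAanti p hp q hq h
  have h3 : (A.filter fun q => q < p) = Finset.Iio p := by
    ext q
    simp only [mem_filter, Finset.mem_Iio]
    refine ⟨fun h => h.2, fun h => ⟨?_, h⟩⟩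
    by_contra hqA
    have hqB : q ∈ B := not_not.mp (fun hb => hqA ((hpart q).mpr hb))
    have : q ∈ B.filter (· < p) := mem_filter.mpr ⟨hqB, h⟩
    rw [hx] at this
    exact absurd this (Finset.notMem_empty q)
  have h4 : (A.filter fun q => ¬ q < p) = insert p (A.filter fun q => p < q) := by
    ext q
    simp only [mem_filter, Finset.mem_insert]
    constructor
    · rintro ⟨hqA, hqp⟩
      rcases lt_trichotomy p q with h | h | h
      · exact Or.inr ⟨hqA, h⟩
      · exact Or.inl h.symm
      · exact absurd h hqp
    · rintro (rfl | ⟨hqA, hqp⟩)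
      · exact ⟨hp, lt_irrefl _⟩
      · exact ⟨hqA, not_lt.mpr (le_of_lt hqp)⟩
  have h5 : (A.filter fun q => q < p).card + (A.filter fun q => ¬ q < p).card = A.card :=
    Finset.card_filter_add_card_filter_not (fun q => q < p)
  rw [h3, h4, Fin.card_Iio, Finset.card_insert_of_notMem (by simp)] at h5
  rw [h1, h2]
  omega

lemma valB (hpart : ∀ i, i ∈ A ↔ i ∉ B)
    (hB : ∀ q ∈ B, ∀ j, q < j → π j < π q)
    {q : Fin n} (hq : q ∈ B)
    (hx : (A.filter fun p => q < p) = ∅) (hy : (A.filter fun p => π q < π p) = ∅) :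
    (π q : ℕ) + (q : ℕ) + 1 = n + A.card := by
  classical
  have h1 : (π q : ℕ) = (A.filter fun p => π p < π q).card + (B.filter fun p => π p < π q).card :=
    (coe_eq_card_lt π q).trans (filter_split hpart _)
  have h2 : (A.filter fun p => π p < π q) = A := by
    apply Finset.filter_true_of_mem
    intro p hp
    have hpq : p ≠ q := fun h => (hpart p).mp hp (h ▸ hq)
    rcases lt_trichotomy (π p) (π q) with h | h | h
    · exact h
    · exact absurd (π.injective h) hpq
    · have : p ∈ A.filter fun p => π q < π p := mem_filter.mpr ⟨hp, h⟩
      rw [hy] at this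
      exact absurd this (Finset.notMem_empty p)
  have h3 : (B.filter fun p => π p < π q) = B.filter fun p => q < p := by
    apply Finset.filter_congr
    intro p hp
    constructor
    · intro hlt
      rcases lt_trichotomy q p with h | h | h
      · exact h
      · exact absurd hlt (by rw [h]; exact lt_irrefl _)
      · exact absurd (hB p hp q h) (lt_asymm hlt)
    · exact fun h => hB q hq p h
  have h4 : (B.filter fun p => q < p) = Finset.Ioi q := by
    ext p
    simp only [mem_filter, Finset.mem_Ioi]
    refine ⟨fun h => h.2, fun h => ⟨?_, h⟩⟩
    by_contra hpB
    have hpA : p ∈ A := (hpart p).mpr hpB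
    have : p ∈ A.filter fun p => q < p := mem_filter.mpr ⟨hpA, h⟩
    rw [hx] at this
    exact absurd this (Finset.notMem_empty p)
  have hqn : (q : ℕ) < n := q.isLt
  rw [h1, h2, h3, h4, Fin.card_Ioi]
  omega
end Val

section CoreLemma
variable {n : ℕ} {π : Equiv.Perm (Fin n)} {A B : Finset (Fin n)}

lemma core (hpart : ∀ i, i ∈ A ↔ i ∉ B)
    (hB : ∀ q ∈ B, ∀ j, q < j → π j < π q)
    (hAanti : ∀ p ∈ A, ∀ p' ∈ A, p < p' → π p' < π p)
    {Δ : ℕ} (hΔA : Δ < A.card) (hΔB : Δ < B.card)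
    (hCI : (crossInv π A B).card = Δ) :
    ((∃ i ≤ Δ, ∀ t, t < A.card - Δ → ∀ h : i + t < n,
        (π ⟨i + t, h⟩ : ℕ) + 1 + (i + t) = A.card) ∧
     (∃ j, A.card ≤ j ∧ j ≤ A.card + Δ ∧ ∀ t, t < B.card - Δ → ∀ h : j + t < n,
        (π ⟨j + t, h⟩ : ℕ) + (j + t) + 1 = n + A.card)) := by
  classical
  have hBne : B.Nonempty := Finset.card_pos.mp (by omega)
  have hAne : A.Nonempty := Finset.card_pos.mp (by omega)
  have hsum := crossInv_card_A hpart hB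
  have hsum' := crossInv_card_B hpart hB
  rw [hCI, Finset.sum_add_distrib] at hsum hsum'
  set X0 := ∑ p ∈ A, (B.filter (· < p)).card with hX0
  set Y0 := ∑ p ∈ A, (B.filter fun q => π q < π p).card with hY0
  set X1 := ∑ q ∈ B, (A.filter fun p => q < p).card with hX1
  set Y1 := ∑ q ∈ B, (A.filter fun p => π q < π p).card with hY1
  constructor
  · -- A side
    set m := B.min' hBne with hm
    have hmB : m ∈ B := B.min'_mem hBne
    have hpA : ∀ p : Fin n, p < m → p ∈ A := by
      intro p hpm
      exact (hpart p).mpr (fun hpB => absurd (B.min'_le p hpB) (not_le.mpr hpm))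
    have hxA : ∀ p : Fin n, p < m → B.filter (· < p) = ∅ := by
      intro p hpm
      apply Finset.filter_eq_empty_iff.mpr
      intro q hq
      exact not_lt.mpr (le_trans (le_of_lt hpm) (B.min'_le q hq))
    set K := univ.filter
      (fun p : Fin n => p < m ∧ (B.filter fun q => π q < π p).card ≠ 0) with hK
    have hKlow : ∀ p q : Fin n, p ≤ q → q ∈ K → p ∈ K := by
      intro p q hpq hqK
      rw [hK, mem_filter] at hqK ⊢
      obtain ⟨_, hqm, hqy⟩ := hqK
      have hpm : p < m := lt_of_le_of_lt hpq hqm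
      refine ⟨mem_univ p, hpm, ?_⟩
      rcases eq_or_lt_of_le hpq with rfl | hlt
      · exact hqy
      · have hsub : (B.filter fun x => π x < π q) ⊆ (B.filter fun x => π x < π p) := by
          intro x hx
          rw [mem_filter] at hx ⊢
          exact ⟨hx.1, hx.2.trans (hAanti p (hpA p hpm) q (hpA q hqm) hlt)⟩
        exact fun hzero => hqy (Nat.le_zero.mp (hzero ▸ Finset.card_le_card hsub))
    set i := K.card with hi
    have hKA : K ⊆ A := fun p hp => hpA p (mem_filter.mp hp).2.1
    have hiY : i ≤ Y0 := by
      calc i = ∑ _p ∈ K, 1 := by rw [hi, Finset.card_eq_sum_ones]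
        _ ≤ ∑ p ∈ K, (B.filter fun q => π q < π p).card :=
            Finset.sum_le_sum (fun p hp => Nat.one_le_iff_ne_zero.mpr (mem_filter.mp hp).2.2)
        _ ≤ Y0 := Finset.sum_le_sum_of_subset hKA
    have hmA : A.card ≤ (m : ℕ) + X0 := by
      have hsplit : (A.filter fun p => p < m).card + (A.filter fun p => ¬ p < m).card = A.card :=
        Finset.card_filter_add_card_filter_not (fun p => p < m)
      have hle1 : (A.filter fun p => p < m).card ≤ (m : ℕ) := by
        have hss : (A.filter fun p => p < m) ⊆ Finset.Iio m :=
          fun q hq => Finset.mem_Iio.mpr (mem_filter.mp hq).2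
        have := Finset.card_le_card hss
        rwa [Fin.card_Iio] at this
      have hle2 : (A.filter fun p => ¬ p < m).card ≤ X0 := by
        calc (A.filter fun p => ¬ p < m).card
            = ∑ _p ∈ A.filter fun p => ¬ p < m, 1 := by rw [Finset.card_eq_sum_ones]
          _ ≤ ∑ p ∈ A.filter (fun p => ¬ p < m), (B.filter (· < p)).card := by
              apply Finset.sum_le_sum
              intro p hp
              rw [mem_filter] at hp
              have hmp : m < p := by
                rcases eq_or_lt_of_le (not_lt.mp hp.2) with h | h
                · exact absurd (h ▸ hmB) ((hpart p).mp hp.1)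
                · exact h
              exact Finset.card_pos.mpr ⟨m, mem_filter.mpr ⟨hmB, hmp⟩⟩
          _ ≤ X0 := Finset.sum_le_sum_of_subset (Finset.filter_subset _ _)
      omega
    refine ⟨i, by omega, ?_⟩
    intro t ht h
    set p : Fin n := ⟨i + t, h⟩ with hp
    have hptm : (p : ℕ) < (m : ℕ) := by
      have hpv : (p : ℕ) = i + t := rfl
      omega
    have hpm : p < m := Fin.lt_def.mpr hptm
    have hpK : p ∉ K := by
      intro hpK
      have hlt := (lowerSet_mem_iff hKlow p).mp hpK
      rw [← hi] at hlt
      have hpv : (p : ℕ) = i + t := rfl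
      omega
    have hyA : (B.filter fun q => π q < π p) = ∅ := by
      by_contra hne
      apply hpK
      rw [hK, mem_filter]
      refine ⟨mem_univ _, hpm, fun h0 => hne (Finset.card_eq_zero.mp h0)⟩
    exact valA hpart hAanti (hpA p hpm) (hxA p hpm) hyA
  · -- B side
    set M := A.max' hAne with hM
    have hMA : M ∈ A := A.max'_mem hAne
    have hqB : ∀ q : Fin n, M < q → q ∈ B := by
      intro q hq
      by_contra hqb
      exact absurd (A.le_max' q ((hpart q).mpr hqb)) (not_le.mpr hq)
    have hx'B : ∀ q : Fin n, M < q → (A.filter fun p => q < p) = ∅ := by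
      intro q hq
      apply Finset.filter_eq_empty_iff.mpr
      intro p hp
      exact not_lt.mpr (le_trans (A.le_max' p hp) (le_of_lt hq))
    set K' := univ.filter
      (fun q : Fin n => M < q ∧ (A.filter fun p => π q < π p).card ≠ 0) with hK'
    have hKup : ∀ p q : Fin n, p ≤ q → p ∈ K' → q ∈ K' := by
      intro p q hpq hpK
      rw [hK', mem_filter] at hpK ⊢
      obtain ⟨_, hpM, hpy⟩ := hpK
      have hqM : M < q := lt_of_lt_of_le hpM hpq
      refine ⟨mem_univ q, hqM, ?_⟩
      rcases eq_or_lt_of_le hpq with rfl | hlt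
      · exact hpy
      · have hsub : (A.filter fun x => π p < π x) ⊆ (A.filter fun x => π q < π x) := by
          intro x hx
          rw [mem_filter] at hx ⊢
          exact ⟨hx.1, (hB p (hqB p hpM) q hlt).trans hx.2⟩
        exact fun hzero => hpy (Nat.le_zero.mp (hzero ▸ Finset.card_le_card hsub))
    set k' := K'.card with hk'
    have hK'B : K' ⊆ B := fun q hq => hqB q (mem_filter.mp hq).2.1
    have hk'Y : k' ≤ Y1 := by
      calc k' = ∑ _q ∈ K', 1 := by rw [hk', Finset.card_eq_sum_ones]
        _ ≤ ∑ q ∈ K', (A.filter fun p => π q < π p).card :=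
            Finset.sum_le_sum (fun q hq => Nat.one_le_iff_ne_zero.mpr (mem_filter.mp hq).2.2)
        _ ≤ Y1 := Finset.sum_le_sum_of_subset hK'B
    have hMn : (M : ℕ) < n := M.isLt
    have hBleM : (B.filter fun q => q ≤ M).card ≤ X1 := by
      calc (B.filter fun q => q ≤ M).card
          = ∑ _q ∈ B.filter fun q => q ≤ M, 1 := by rw [Finset.card_eq_sum_ones]
        _ ≤ ∑ q ∈ B.filter (fun q => q ≤ M), (A.filter fun p => q < p).card := by
            apply Finset.sum_le_sum
            intro q hq
            rw [mem_filter] at hq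
            have hqM : q < M := by
              rcases eq_or_lt_of_le hq.2 with h | h
              · exact absurd (h ▸ hq.1) (fun hh => (hpart M).mp hMA hh)
              · exact h
            exact Finset.card_pos.mpr ⟨M, mem_filter.mpr ⟨hMA, hqM⟩⟩
        _ ≤ X1 := Finset.sum_le_sum_of_subset (Finset.filter_subset _ _)
    have hjA : A.card ≤ (M : ℕ) + 1 := by
      have hss : A ⊆ Finset.Iic M := fun p hp => Finset.mem_Iic.mpr (A.le_max' p hp)
      have := Finset.card_le_card hss
      rwa [Fin.card_Iic] at this
    have hjX : (M : ℕ) + 1 ≤ A.card + X1 := by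
      have hIic : (univ.filter fun q : Fin n => q ≤ M).card = (M : ℕ) + 1 := by
        have : (univ.filter fun q : Fin n => q ≤ M) = Finset.Iic M := by
          ext q; simp [Finset.mem_Iic]
        rw [this, Fin.card_Iic]
      have := filter_split hpart (fun q : Fin n => q ≤ M)
      have hAle : (A.filter fun q => q ≤ M).card ≤ A.card :=
        Finset.card_le_card (Finset.filter_subset _ _)
      omega
    have hBcount : B.card ≤ X1 + (n - 1 - (M : ℕ)) := by
      have hsplit : (B.filter fun q => q ≤ M).card + (B.filter fun q => ¬ q ≤ M).card = B.card :=
        Finset.card_filter_add_card_filter_not (fun q => q ≤ M)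
      have hle1 : (B.filter fun q => ¬ q ≤ M).card ≤ n - 1 - (M : ℕ) := by
        have hss : (B.filter fun q => ¬ q ≤ M) ⊆ Finset.Ioi M :=
          fun q hq => Finset.mem_Ioi.mpr (not_le.mp (mem_filter.mp hq).2)
        have := Finset.card_le_card hss
        rwa [Fin.card_Ioi] at this
      omega
    refine ⟨(M : ℕ) + 1, by omega, by omega, ?_⟩
    intro t ht h
    set q : Fin n := ⟨(M : ℕ) + 1 + t, h⟩ with hq
    have hqv : (q : ℕ) = (M : ℕ) + 1 + t := rfl
    have hMq : M < q := Fin.lt_def.mpr (by omega)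
    have hqK' : q ∉ K' := by
      intro hqK
      have hge := (upperSet_mem_iff hKup q).mp hqK
      rw [← hk'] at hge
      omega
    have hy'B : (A.filter fun p => π q < π p) = ∅ := by
      by_contra hne
      apply hqK'
      rw [hK', mem_filter]
      exact ⟨mem_univ _, hMq, fun h0 => hne (Finset.card_eq_zero.mp h0)⟩
    exact valB hpart hB (hqB q hMq) (hx'B q hMq) hy'B
end CoreLemma

set_option maxHeartbeats 2000000



/-- The number of inversions of a permutation of `Fin n`:
pairs of positions `i < j` with `π i > π j`. -/
def invCount {n : ℕ} (π : Equiv.Perm (Fin n)) : ℕ :=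
  (Finset.univ.filter fun p : Fin n × Fin n => p.1 < p.2 ∧ π p.2 < π p.1).card

/-- The length of the longest (strictly) increasing subsequence of `π`. -/
noncomputable def lisLen {n : ℕ} (π : Equiv.Perm (Fin n)) : ℕ :=
  sSup {k | ∃ t : Finset (Fin n), t.card = k ∧ StrictMonoOn ⇑π ↑t}

/-- The length of the longest (strictly) decreasing subsequence of `π`. -/
noncomputable def ldsLen {n : ℕ} (π : Equiv.Perm (Fin n)) : ℕ :=
  sSup {k | ∃ t : Finset (Fin n), t.card = k ∧ StrictAntiOn ⇑π ↑t}

/-- Corollary 4.6, structure theorem; 1-indexed statement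
translated to 0-indexed positions: `π(i) = s+1-i` at the 1-indexed position
`i` becomes value `s-1-pos` at 0-indexed position `pos`, etc.: every
permutation of shape `λ' = (s,r)` with `Δ < r` extra inversions agrees with
one of the two minimal permutations on a run of `s-Δ` consecutive positions
in one block and `r-Δ` consecutive positions in the other. -/
theorem stmt_15 (s r Δ : ℕ) (hr : 1 ≤ r) (hrs : r ≤ s) (hΔ : Δ < r)
    (π : Equiv.Perm (Fin (s + r)))
    (hlis : lisLen π = 2) (hlds : ldsLen π = s)
    (hinv : invCount π = s.choose 2 + r.choose 2 + Δ) :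
    ((∃ i ≤ Δ, ∀ t < s - Δ, ∀ h : i + t < s + r,
        ((π ⟨i + t, h⟩ : Fin (s + r)) : ℕ) = s - 1 - (i + t)) ∧
     (∃ j, s ≤ j ∧ j ≤ s + Δ ∧ ∀ t < r - Δ, ∀ h : j + t < s + r,
        ((π ⟨j + t, h⟩ : Fin (s + r)) : ℕ) = 2 * s + r - 1 - (j + t))) ∨
    ((∃ i ≤ Δ, ∀ t < r - Δ, ∀ h : i + t < s + r,
        ((π ⟨i + t, h⟩ : Fin (s + r)) : ℕ) = r - 1 - (i + t)) ∧
     (∃ j, r ≤ j ∧ j ≤ r + Δ ∧ ∀ t < s - Δ, ∀ h : j + t < s + r,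
        ((π ⟨j + t, h⟩ : Fin (s + r)) : ℕ) = s + 2 * r - 1 - (j + t))) := by
  classical
  have hBddM : BddAbove {k | ∃ t : Finset (Fin (s + r)), t.card = k ∧ StrictMonoOn ⇑π ↑t} := by
    refine ⟨s + r, fun k hk => ?_⟩
    obtain ⟨t, ht, _⟩ := hk
    calc k = t.card := ht.symm
      _ ≤ (univ : Finset (Fin (s + r))).card := Finset.card_le_univ t
      _ = s + r := by simp
  have hBddA : BddAbove {k | ∃ t : Finset (Fin (s + r)), t.card = k ∧ StrictAntiOn ⇑π ↑t} := by
    refine ⟨s + r, fun k hk => ?_⟩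
    obtain ⟨t, ht, _⟩ := hk
    calc k = t.card := ht.symm
      _ ≤ (univ : Finset (Fin (s + r))).card := Finset.card_le_univ t
      _ = s + r := by simp
  have no123 : ∀ i j k : Fin (s + r), i < j → j < k → π i < π j → π j < π k → False := by
    intro i j k hij hjk h1 h2
    have hcard : ({i, j, k} : Finset (Fin (s + r))).card = 3 := by
      rw [Finset.card_insert_of_notMem (by simp [hij.ne, (hij.trans hjk).ne]),
        Finset.card_insert_of_notMem (by simp [hjk.ne]), Finset.card_singleton]
    have hmono : StrictMonoOn ⇑π ↑({i, j, k} : Finset (Fin (s + r))) := by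
      intro x hx y hy hxy
      simp only [Finset.coe_insert, Set.mem_insert_iff, Finset.coe_singleton,
        Set.mem_singleton_iff] at hx hy
      rcases hx with rfl | rfl | rfl <;> rcases hy with rfl | rfl | rfl
      · exact absurd hxy (lt_irrefl _)
      · exact h1
      · exact h1.trans h2
      · exact absurd (hxy.trans hij) (lt_irrefl _)
      · exact absurd hxy (lt_irrefl _)
      · exact h2
      · exact absurd (hxy.trans (hij.trans hjk)) (lt_irrefl _)
      · exact absurd (hxy.trans hjk) (lt_irrefl _)
      · exact absurd hxy (lt_irrefl _)
    have h3 : 3 ≤ lisLen π := le_csSup hBddM ⟨{i, j, k}, hcard, hmono⟩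
    rw [hlis] at h3
    omega
  have hanti_le : ∀ t : Finset (Fin (s + r)), StrictAntiOn ⇑π ↑t → t.card ≤ s := by
    intro t ht
    have h0 : t.card ≤ ldsLen π := le_csSup hBddA ⟨t, rfl, ht⟩
    omega
  have hchain : ∃ t : Finset (Fin (s + r)), t.card = s ∧ StrictAntiOn ⇑π ↑t := by
    have hne : {k | ∃ t : Finset (Fin (s + r)), t.card = k ∧ StrictAntiOn ⇑π ↑t}.Nonempty :=
      ⟨0, ∅, Finset.card_empty, by intro x hx; simp at hx⟩
    have h0 : ldsLen π ∈ {k | ∃ t : Finset (Fin (s + r)), t.card = k ∧ StrictAntiOn ⇑π ↑t} :=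
      Nat.sSup_mem hne hBddA
    rw [hlds] at h0
    exact h0
  set Bs : Finset (Fin (s + r)) := univ.filter (fun i => ∀ j, i < j → π j < π i) with hBsdef
  set As : Finset (Fin (s + r)) := univ.filter (fun i => ¬ ∀ j, i < j → π j < π i) with hAsdef
  have hpart : ∀ i, i ∈ As ↔ i ∉ Bs := by
    intro i
    simp only [hAsdef, hBsdef, mem_filter, mem_univ, true_and]
  have hBprop : ∀ q ∈ Bs, ∀ j, q < j → π j < π q := by
    intro q hq
    exact (mem_filter.mp hq).2
  have hAanti : ∀ p ∈ As, ∀ p' ∈ As, p < p' → π p' < π p := by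
    intro p hp p' hp' hlt
    by_contra hnot
    have h1 : π p < π p' :=
      lt_of_le_of_ne (not_lt.mp hnot) (fun h => (ne_of_lt hlt) (π.injective h))
    have hp'w := (mem_filter.mp hp').2
    push_neg at hp'w
    obtain ⟨j, hj1, hj2⟩ := hp'w
    have h2 : π p' < π j :=
      lt_of_le_of_ne hj2 (fun h => (ne_of_lt hj1) (π.injective h))
    exact no123 p p' j hlt hj1 h1 h2
  have hBanti : StrictAntiOn ⇑π ↑Bs := by
    intro x hx y _ hxy
    exact hBprop x (Finset.mem_coe.mp hx) y hxy
  have hAantiOn : StrictAntiOn ⇑π ↑As := by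
    intro x hx y hy hxy
    exact hAanti x (Finset.mem_coe.mp hx) y (Finset.mem_coe.mp hy) hxy
  have hBcard : Bs.card ≤ s := hanti_le _ hBanti
  have hAcard : As.card ≤ s := hanti_le _ hAantiOn
  have habn : As.card + Bs.card = s + r := by
    have h := filter_split hpart (fun _ : Fin (s + r) => True)
    simp only [Finset.filter_true] at h
    rw [Finset.card_univ, Fintype.card_fin] at h
    omega
  -- inversion decomposition
  have hd2 : Disjoint ((Bs ×ˢ Bs).filter fun e => e.1 < e.2) (crossInv π As Bs) := by
    rw [Finset.disjoint_left]
    intro e he hce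
    rw [mem_filter, Finset.mem_product] at he
    simp only [crossInv, mem_filter, mem_univ, true_and] at hce
    rcases hce.2.2 with ⟨h1A, _⟩ | ⟨_, h2A⟩
    · exact (hpart e.1).mp h1A he.1.1
    · exact (hpart e.2).mp h2A he.1.2
  have hd1 : Disjoint ((As ×ˢ As).filter fun e => e.1 < e.2)
      (((Bs ×ˢ Bs).filter fun e => e.1 < e.2) ∪ crossInv π As Bs) := by
    rw [Finset.disjoint_left]
    intro e he hce
    rw [mem_filter, Finset.mem_product] at he
    rw [Finset.mem_union] at hce
    rcases hce with hbb | hci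
    · rw [mem_filter, Finset.mem_product] at hbb
      exact (hpart e.1).mp he.1.1 hbb.1.1
    · simp only [crossInv, mem_filter, mem_univ, true_and] at hci
      rcases hci.2.2 with ⟨_, h2B⟩ | ⟨h1B, _⟩
      · exact (hpart e.2).mp he.1.2 h2B
      · exact (hpart e.1).mp he.1.1 h1B
  have hdecomp : invCount π
      = As.card.choose 2 + Bs.card.choose 2 + (crossInv π As Bs).card := by
    rw [invCount, ← card_ltPairs As, ← card_ltPairs Bs]
    have hunion : (univ.filter fun e : Fin (s + r) × Fin (s + r) => e.1 < e.2 ∧ π e.2 < π e.1)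
        = ((As ×ˢ As).filter fun e => e.1 < e.2)
          ∪ (((Bs ×ˢ Bs).filter fun e => e.1 < e.2) ∪ crossInv π As Bs) := by
      ext e
      simp only [mem_filter, mem_univ, true_and, Finset.mem_union, Finset.mem_product, crossInv]
      constructor
      · rintro ⟨hlt, hinv2⟩
        by_cases h1 : e.1 ∈ As <;> by_cases h2 : e.2 ∈ As
        · exact Or.inl ⟨⟨h1, h2⟩, hlt⟩
        · have h2B : e.2 ∈ Bs := not_not.mp (fun hb => h2 ((hpart e.2).mpr hb))
          exact Or.inr (Or.inr ⟨hlt, hinv2, Or.inl ⟨h1, h2B⟩⟩)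
        · have h1B : e.1 ∈ Bs := not_not.mp (fun hb => h1 ((hpart e.1).mpr hb))
          exact Or.inr (Or.inr ⟨hlt, hinv2, Or.inr ⟨h1B, h2⟩⟩)
        · have h1B : e.1 ∈ Bs := not_not.mp (fun hb => h1 ((hpart e.1).mpr hb))
          have h2B : e.2 ∈ Bs := not_not.mp (fun hb => h2 ((hpart e.2).mpr hb))
          exact Or.inr (Or.inl ⟨⟨h1B, h2B⟩, hlt⟩)
      · rintro (⟨⟨h1, h2⟩, hlt⟩ | ⟨⟨h1, h2⟩, hlt⟩ | ⟨hlt, hinv2, _⟩)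
        · exact ⟨hlt, hAanti e.1 h1 e.2 h2 hlt⟩
        · exact ⟨hlt, hBprop e.1 h1 e.2 hlt⟩
        · exact ⟨hlt, hinv2⟩
    rw [hunion, Finset.card_union_of_disjoint hd1, Finset.card_union_of_disjoint hd2]
    omega
  -- the chain forces the sizes
  obtain ⟨c, hccard, hcanti⟩ := hchain
  set pA := (c.filter (· ∈ As)).card with hpAdef
  set qB := (c.filter (· ∈ Bs)).card with hqBdef
  have hpq : pA + qB = s := by
    have hsplit : (c.filter fun x => x ∈ As).card + (c.filter fun x => ¬ x ∈ As).card = c.card :=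
      Finset.card_filter_add_card_filter_not (fun x => x ∈ As)
    have hcong : (c.filter fun x => ¬ x ∈ As) = c.filter fun x => x ∈ Bs := by
      apply Finset.filter_congr
      intro x _
      constructor
      · intro h
        exact not_not.mp (fun hb => h ((hpart x).mpr hb))
      · intro hb hA
        exact (hpart x).mp hA hb
    rw [hcong] at hsplit
    rw [hpAdef, hqBdef]
    omega
  have hple : pA ≤ As.card :=
    Finset.card_le_card (fun x hx => (mem_filter.mp hx).2)
  have hqle : qB ≤ Bs.card :=
    Finset.card_le_card (fun x hx => (mem_filter.mp hx).2)
  have hprod : pA * qB ≤ (crossInv π As Bs).card := by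
    rw [hpAdef, hqBdef, ← Finset.card_product]
    apply Finset.card_le_card_of_injOn (fun e => if e.1 < e.2 then e else (e.2, e.1))
    · rintro ⟨u, v⟩ he
      rw [Finset.mem_coe, Finset.mem_product] at he
      obtain ⟨hu, hv⟩ := he
      rw [mem_filter] at hu hv
      have huv : u ≠ v := fun h => (hpart u).mp hu.2 (h ▸ hv.2)
      simp only [Finset.mem_coe, crossInv, mem_filter, mem_univ, true_and]
      rcases huv.lt_or_gt with h | h
      · rw [if_pos h]
        exact ⟨h, hcanti (Finset.mem_coe.mpr hu.1) (Finset.mem_coe.mpr hv.1) h,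
          Or.inl ⟨hu.2, hv.2⟩⟩
      · rw [if_neg (not_lt.mpr (le_of_lt h))]
        exact ⟨h, hcanti (Finset.mem_coe.mpr hv.1) (Finset.mem_coe.mpr hu.1) h,
          Or.inr ⟨hv.2, hu.2⟩⟩
    · rintro ⟨u, v⟩ hu ⟨u', v'⟩ hv' heq
      simp only [Finset.coe_product, Set.mem_prod, Finset.mem_coe, mem_filter] at hu hv'
      have h1 : u ≠ v := fun h => (hpart u).mp hu.1.2 (h ▸ hu.2.2)
      have h2 : u' ≠ v' := fun h => (hpart u').mp hv'.1.2 (h ▸ hv'.2.2)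
      dsimp only at heq
      rcases h1.lt_or_gt with ha | ha <;> rcases h2.lt_or_gt with hb | hb
      · rwa [if_pos ha, if_pos hb] at heq
      · rw [if_pos ha, if_neg (not_lt.mpr hb.le)] at heq
        injection heq with h3 h4
        exact (((hpart v').mp (h3 ▸ hu.1.2)) hv'.2.2).elim
      · rw [if_neg (not_lt.mpr ha.le), if_pos hb] at heq
        injection heq with h3 h4
        exact (((hpart u').mp hv'.1.2) (h3 ▸ hu.2.2)).elim
      · rw [if_neg (not_lt.mpr ha.le), if_neg (not_lt.mpr hb.le)] at heq
        injection heq with h3 h4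
        subst h3; subst h4; rfl
  have heqinv : As.card.choose 2 + Bs.card.choose 2 + (crossInv π As Bs).card
      = s.choose 2 + r.choose 2 + Δ := by
    rw [← hdecomp]
    exact hinv
  have hkey : As.card = s ∨ As.card = r := by
    by_contra hcon
    push_neg at hcon
    obtain ⟨hns, hnr⟩ := hcon
    have h2eq : 2 * As.card.choose 2 + 2 * Bs.card.choose 2 + 2 * (crossInv π As Bs).card
        = 2 * s.choose 2 + 2 * r.choose 2 + 2 * Δ := by omega
    rw [two_mul_choose_two, two_mul_choose_two, two_mul_choose_two, two_mul_choose_two] at h2eq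
    have hra : r + 1 ≤ As.card := by omega
    have has : As.card + 1 ≤ s := by omega
    have hp1 : As.card ≤ pA + r := by omega
    have hq1 : s ≤ qB + As.card := by omega
    have h1a : 1 ≤ As.card := by omega
    have h1b : 1 ≤ Bs.card := by omega
    have h1s : 1 ≤ s := by omega
    have h1r : 1 ≤ r := hr
    zify [h1a, h1b, h1s, h1r] at h2eq
    have Hci : (pA : ℤ) * qB ≤ ((crossInv π As Bs).card : ℤ) := by exact_mod_cast hprod
    have Hpq : (pA : ℤ) + qB = s := by exact_mod_cast hpq
    have Hab : (As.card : ℤ) + Bs.card = (s : ℤ) + r := by exact_mod_cast habn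
    have Hp1 : (As.card : ℤ) ≤ (pA : ℤ) + r := by exact_mod_cast hp1
    have Hq1 : (s : ℤ) ≤ (qB : ℤ) + As.card := by exact_mod_cast hq1
    have Hra : (r : ℤ) + 1 ≤ As.card := by exact_mod_cast hra
    have Has : (As.card : ℤ) + 1 ≤ s := by exact_mod_cast has
    have HΔ : (Δ : ℤ) + 1 ≤ r := by exact_mod_cast hΔ
    have hα : (0 : ℤ) ≤ (pA : ℤ) - ((As.card : ℤ) - r) := by linarith
    have hβ : (0 : ℤ) ≤ (qB : ℤ) - ((s : ℤ) - (As.card : ℤ)) := by linarith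
    have h1' : (pA : ℤ) - ((As.card : ℤ) - r)
        ≤ ((pA : ℤ) - ((As.card : ℤ) - r)) * ((s : ℤ) - (As.card : ℤ)) :=
      le_mul_of_one_le_right hα (by linarith)
    have h2' : (qB : ℤ) - ((s : ℤ) - (As.card : ℤ))
        ≤ ((qB : ℤ) - ((s : ℤ) - (As.card : ℤ))) * ((As.card : ℤ) - r) :=
      le_mul_of_one_le_right hβ (by linarith)
    have h3' : (0 : ℤ) ≤ ((pA : ℤ) - ((As.card : ℤ) - r)) * ((qB : ℤ) - ((s : ℤ) - (As.card : ℤ))) :=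
      mul_nonneg hα hβ
    have hid : (pA : ℤ) * qB
        = ((As.card : ℤ) - r) * ((s : ℤ) - (As.card : ℤ))
          + ((pA : ℤ) - ((As.card : ℤ) - r)) * ((s : ℤ) - (As.card : ℤ))
          + ((qB : ℤ) - ((s : ℤ) - (As.card : ℤ))) * ((As.card : ℤ) - r)
          + ((pA : ℤ) - ((As.card : ℤ) - r)) * ((qB : ℤ) - ((s : ℤ) - (As.card : ℤ)))
          - ((qB : ℤ) + (pA : ℤ) - (r : ℤ)) * 0 := by ring
    have hb' : (Bs.card : ℤ) = (s : ℤ) + r - As.card := by linarith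
    have hid2 : (As.card : ℤ) * ((As.card : ℤ) - 1) + (Bs.card : ℤ) * ((Bs.card : ℤ) - 1)
        + 2 * (((As.card : ℤ) - r) * ((s : ℤ) - (As.card : ℤ)))
        = (s : ℤ) * ((s : ℤ) - 1) + (r : ℤ) * ((r : ℤ) - 1) := by
      rw [hb']; ring
    linarith [h2eq, hid, hid2, h1', h2', h3', Hci, HΔ, Hpq]
  rcases hkey with ha | ha
  · have hb : Bs.card = r := by omega
    have hci : (crossInv π As Bs).card = Δ := by
      have e1 : As.card.choose 2 = s.choose 2 := by rw [ha]
      have e2 : Bs.card.choose 2 = r.choose 2 := by rw [hb]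
      omega
    obtain ⟨⟨i, hiΔ, hrun1⟩, ⟨j, hj1, hj2, hrun2⟩⟩ :=
      core hpart hBprop hAanti (by omega) (by omega) hci
    left
    constructor
    · refine ⟨i, hiΔ, ?_⟩
      intro t ht h
      have hv := hrun1 t (by omega) h
      omega
    · refine ⟨j, by omega, by omega, ?_⟩
      intro t ht h
      have hv := hrun2 t (by omega) h
      omega
  · have hb : Bs.card = s := by omega
    have hci : (crossInv π As Bs).card = Δ := by
      have e1 : As.card.choose 2 = r.choose 2 := by rw [ha]
      have e2 : Bs.card.choose 2 = s.choose 2 := by rw [hb]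
      omega
    obtain ⟨⟨i, hiΔ, hrun1⟩, ⟨j, hj1, hj2, hrun2⟩⟩ :=
      core hpart hBprop hAanti (by omega) (by omega) hci
    right
    constructor
    · refine ⟨i, hiΔ, ?_⟩
      intro t ht h
      have hv := hrun1 t (by omega) h
      omega
    · refine ⟨j, by omega, by omega, ?_⟩
      intro t ht h
      have hv := hrun2 t (by omega) h
      omega
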